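/- There exists a constant c such that for all integers p ≥ 1 and r ≥ c·p², every bijection f : [r]^(p) → [r]^(p) fixes an intersection: there exist distinct p-sets x, y ⊆ [r] with |f(x) ∩ f(y)| = |x ∩ y|. (In particular it suffices to show: if f is a bijection with f([p]) = [p] and no x satisfies |f(x) ∩ [p]| = |x ∩ [p]| = 0, then C(r,p) < 2·C(r−p,p), which fails for r ≥ c·p².) -/

import Mathlib

lemma aux_bernoulli (p : ℕ) : ∀ k : ℕ, (2*p+1)^k * (2*p+1-k) ≤ (2*p)^k * (2*p+1) := by
  intro k
  induction k with
  | zero => simp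
  | succ k ih =>
    have key : (2*p+1) * (2*p+1-(k+1)) ≤ (2*p+1-k) * (2*p) := by
      rcases le_or_gt k (2*p) with h | h
      · obtain ⟨a, ha⟩ := Nat.le.dest h
        have h1 : 2*p+1-(k+1) = a := by omega
        have h2 : 2*p+1-k = a+1 := by omega
        rw [h1, h2, ← ha]
        nlinarith
      · have h1 : 2*p+1-(k+1) = 0 := by omega
        rw [h1]; simp
    calc (2*p+1)^(k+1) * (2*p+1-(k+1))
        = (2*p+1)^k * ((2*p+1) * (2*p+1-(k+1))) := by ring
      _ ≤ (2*p+1)^k * ((2*p+1-k) * (2*p)) := Nat.mul_le_mul_left _ key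
      _ = ((2*p+1)^k * (2*p+1-k)) * (2*p) := by ring
      _ ≤ ((2*p)^k * (2*p+1)) * (2*p) := Nat.mul_le_mul_right _ ih
      _ = (2*p)^(k+1) * (2*p+1) := by ring

lemma pow_ineq (p : ℕ) (hp : 1 ≤ p) : (2*p+1)^p < 2 * (2*p)^p := by
  have h := aux_bernoulli p p
  have h1 : 2*p+1-p = p+1 := by omega
  rw [h1] at h
  have hpos : 0 < (2*p)^p := Nat.pow_pos (by omega)
  have h2 : (2*p)^p * (2*p+1) < (2 * (2*p)^p) * (p+1) := by nlinarith
  exact Nat.lt_of_mul_lt_mul_right (lt_of_le_of_lt h h2)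

lemma desc_ineq (p r : ℕ) (hp : 1 ≤ p) (hr : 2*p^2 + 2*p ≤ r) :
    Nat.descFactorial r p < 2 * Nat.descFactorial (r-p) p := by
  have hprod : Nat.descFactorial r p * (2*p)^p ≤ Nat.descFactorial (r-p) p * (2*p+1)^p := by
    rw [Nat.descFactorial_eq_prod_range, Nat.descFactorial_eq_prod_range]
    have e1 : (2*p)^p = ∏ _i ∈ Finset.range p, (2*p) := by
      rw [Finset.prod_const, Finset.card_range]
    have e2 : (2*p+1)^p = ∏ _i ∈ Finset.range p, (2*p+1) := by
      rw [Finset.prod_const, Finset.card_range]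
    rw [e1, e2, ← Finset.prod_mul_distrib, ← Finset.prod_mul_distrib]
    apply Finset.prod_le_prod'
    intro i hi
    rw [Finset.mem_range] at hi
    have ha : 2*p^2 ≤ r - p - i := by omega
    obtain ⟨a, hA⟩ := Nat.le.dest ha
    have hri : r - i = (r - p - i) + p := by omega
    rw [hri, ← hA]
    nlinarith
  have hdpos : 0 < Nat.descFactorial (r-p) p := by
    rw [Nat.pos_iff_ne_zero, Ne, Nat.descFactorial_eq_zero_iff_lt]
    omega
  have h2 : Nat.descFactorial (r-p) p * (2*p+1)^p
      < Nat.descFactorial (r-p) p * (2 * (2*p)^p) :=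
    by have := pow_ineq p hp; exact (Nat.mul_lt_mul_left hdpos).mpr this
  have h3 : Nat.descFactorial r p * (2*p)^p
      < (2 * Nat.descFactorial (r-p) p) * (2*p)^p := by
    calc Nat.descFactorial r p * (2*p)^p ≤ _ := hprod
      _ < _ := h2
      _ = (2 * Nat.descFactorial (r-p) p) * (2*p)^p := by ring
  exact Nat.lt_of_mul_lt_mul_right h3

lemma choose_ineq (p r : ℕ) (hp : 1 ≤ p) (hr : 2*p^2 + 2*p ≤ r) :
    Nat.choose r p < 2 * Nat.choose (r-p) p := by
  have h := desc_ineq p r hp hr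
  rw [Nat.descFactorial_eq_factorial_mul_choose, Nat.descFactorial_eq_factorial_mul_choose] at h
  have hfac : 0 < Nat.factorial p := Nat.factorial_pos p
  have : Nat.factorial p * Nat.choose r p < Nat.factorial p * (2 * Nat.choose (r-p) p) := by
    calc Nat.factorial p * Nat.choose r p < 2 * (Nat.factorial p * Nat.choose (r-p) p) := h
      _ = Nat.factorial p * (2 * Nat.choose (r-p) p) := by ring
  exact Nat.lt_of_mul_lt_mul_left this

theorem stmt_19 :
    ∃ c : ℕ, ∀ p r : ℕ, 1 ≤ p → c * p ^ 2 ≤ r →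
      ∀ f : Finset ℕ → Finset ℕ,
        (∀ x : Finset ℕ, x ⊆ Finset.Icc 1 r → x.card = p →
          f x ⊆ Finset.Icc 1 r ∧ (f x).card = p) →
        (∀ x y : Finset ℕ, x ⊆ Finset.Icc 1 r → x.card = p →
          y ⊆ Finset.Icc 1 r → y.card = p → f x = f y → x = y) →
        (∀ y : Finset ℕ, y ⊆ Finset.Icc 1 r → y.card = p →
          ∃ x : Finset ℕ, x ⊆ Finset.Icc 1 r ∧ x.card = p ∧ f x = y) →
        ∃ x y : Finset ℕ, x ⊆ Finset.Icc 1 r ∧ x.card = p ∧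
          y ⊆ Finset.Icc 1 r ∧ y.card = p ∧ x ≠ y ∧
          (f x ∩ f y).card = (x ∩ y).card := by
  use 4
  intro p r hp hr f hmap hinj _hsurj
  set I : Finset ℕ := Finset.Icc 1 r with hI
  have hIcard : I.card = r := by simp [hI]
  have hrp : 2*p^2 + 2*p ≤ r := by nlinarith
  have hpr : p ≤ r := by nlinarith
  set P : Finset (Finset ℕ) := I.powersetCard p with hP
  have hmemP : ∀ x : Finset ℕ, x ∈ P ↔ x ⊆ I ∧ x.card = p := by
    intro x; simp [hP, Finset.mem_powersetCard]
  have hPcard : P.card = Nat.choose r p := by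
    rw [hP, Finset.card_powersetCard, hIcard]
  -- pick z
  obtain ⟨z, hzI, hzcard⟩ := Finset.exists_subset_card_eq (hIcard ▸ hpr : p ≤ I.card)
  obtain ⟨hfzI, hfzcard⟩ := hmap z hzI hzcard
  -- the count of p-subsets of I disjoint from a fixed p-set w ⊆ I
  have hdisj_count : ∀ w : Finset ℕ, w ⊆ I → w.card = p →
      (P.filter (fun x => Disjoint x w)).card = Nat.choose (r-p) p := by
    intro w hwI hwcard
    have : P.filter (fun x => Disjoint x w) = (I \ w).powersetCard p := by
      ext x
      simp only [Finset.mem_filter, hmemP, Finset.mem_powersetCard, Finset.subset_sdiff]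
      tauto
    rw [this, Finset.card_powersetCard, Finset.card_sdiff_of_subset hwI, hIcard, hwcard]
  set S : Finset (Finset ℕ) := P.filter (fun x => Disjoint x z) with hS
  set T : Finset (Finset ℕ) := P.filter (fun x => ¬ Disjoint (f x) (f z)) with hT
  have hScard : S.card = Nat.choose (r-p) p := hdisj_count z hzI hzcard
  -- T injects into p-subsets meeting f z
  have hTcard : T.card ≤ (P.filter (fun y => ¬ Disjoint y (f z))).card := by
    apply Finset.card_le_card_of_injOn f
    · intro x hx
      simp only [Finset.mem_coe, hT, Finset.mem_filter] at hx
      obtain ⟨hxP, hxnd⟩ := hx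
      rw [hmemP] at hxP
      obtain ⟨hfxI, hfxcard⟩ := hmap x hxP.1 hxP.2
      rw [Finset.mem_coe, Finset.mem_filter, hmemP]
      exact ⟨⟨hfxI, hfxcard⟩, hxnd⟩
    · intro a ha b hb hab
      simp only [Finset.mem_coe, hT, Finset.mem_filter] at ha hb
      obtain ⟨haP, -⟩ := ha
      obtain ⟨hbP, -⟩ := hb
      rw [hmemP] at haP hbP
      exact hinj a b haP.1 haP.2 hbP.1 hbP.2 hab
  have hsplit := Finset.card_filter_add_card_filter_not
    (s := P) (p := fun y => Disjoint y (f z))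
  have hmeet : (P.filter (fun y => ¬ Disjoint y (f z))).card
      = Nat.choose r p - Nat.choose (r-p) p := by
    have h1 := hdisj_count (f z) hfzI hfzcard
    omega
  have hchoose := choose_ineq p r hp hrp
  have hTS : T.card < S.card := by
    rw [hScard]
    have : Nat.choose (r-p) p ≤ Nat.choose r p := Nat.choose_le_choose p (by omega)
    omega
  -- find x ∈ S \ T
  have hnotsub : ¬ S ⊆ T := fun h => absurd (Finset.card_le_card h) (by omega)
  obtain ⟨x, hxS, hxT⟩ := Finset.not_subset.mp hnotsub
  rw [hS, Finset.mem_filter] at hxS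
  obtain ⟨hxP, hxdz⟩ := hxS
  rw [hmemP] at hxP
  have hfxd : Disjoint (f x) (f z) := by
    by_contra hcon
    exact hxT (by rw [hT, Finset.mem_filter, hmemP]; exact ⟨hxP, hcon⟩)
  have hxne : x ≠ z := by
    intro h
    subst h
    have hxe : x = ⊥ := disjoint_self.mp hxdz
    have : p = 0 := by rw [← hxP.2, hxe]; simp
    omega
  refine ⟨x, z, hxP.1, hxP.2, hzI, hzcard, hxne, ?_⟩
  rw [Finset.disjoint_iff_inter_eq_empty] at hfxd hxdz
  rw [hfxd, hxdz]
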